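/- There exists an optimal (minimum-cost) assignment of tasks to resources in which the resources can be linearly ordered so that if resource i precedes resource j, then every task assigned to i has weight at most the weight of every task assigned to j. -/

import Mathlib

open Finset

/-- Social cost: each task pays the load of its resource. -/
noncomputable def wCost {n m : ℕ} (d : Fin m → ℝ) (w : Fin n → ℝ)
    (A : Fin n → Fin m) : ℝ :=
  ∑ i : Fin n, d (A i) * ∑ j ∈ univ.filter (fun j => A j = A i), w j

/-- fiber of an assignment over a resource -/
def fibA {n m : ℕ} (A : Fin n → Fin m) (ℓ : Fin m) : Finset (Fin n) :=
  univ.filter (fun s => A s = ℓ)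

/-- secondary potential -/
noncomputable def wPhi {n m : ℕ} (w : Fin n → ℝ) (A : Fin n → Fin m) : ℝ :=
  ∑ s : Fin n, ((A s : ℕ) : ℝ) * w s

lemma sum_split_two {α : Type*} [Fintype α] [DecidableEq α] (F : α → ℝ) {i j : α}
    (h : i ≠ j) :
    ∑ x : α, F x = F i + F j + ∑ x ∈ (univ.erase i).erase j, F x := by
  rw [← Finset.sum_erase_add univ F (mem_univ i),
    ← Finset.sum_erase_add (univ.erase i) F (mem_erase.2 ⟨h.symm, mem_univ j⟩)]
  ring

lemma wCost_eq {n m : ℕ} (d : Fin m → ℝ) (w : Fin n → ℝ) (A : Fin n → Fin m) :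
    wCost d w A = ∑ ℓ : Fin m, ((fibA A ℓ).card : ℝ) * (d ℓ * ∑ s ∈ fibA A ℓ, w s) := by
  unfold wCost fibA
  rw [← Finset.sum_fiberwise univ A
    (fun i => d (A i) * ∑ j ∈ univ.filter (fun j => A j = A i), w j)]
  refine Finset.sum_congr rfl fun ℓ _ => ?_
  rw [Finset.sum_congr rfl (fun i hi => ?_), Finset.sum_const, nsmul_eq_mul]
  have hAi : A i = ℓ := (mem_filter.mp hi).2
  rw [hAi]

section Swap

variable {n m : ℕ} (d : Fin m → ℝ) (w : Fin n → ℝ) (A : Fin n → Fin m)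
  {t t' : Fin n} {i j : Fin m}

lemma fib_swap_ne (ht : A t = i) (ht' : A t' = j) (hij : i ≠ j) {ℓ : Fin m}
    (hℓi : ℓ ≠ i) (hℓj : ℓ ≠ j) :
    fibA (fun s => if s = t then j else if s = t' then i else A s) ℓ = fibA A ℓ := by
  unfold fibA
  ext s
  simp only [mem_filter, mem_univ, true_and]
  split_ifs with h1 h2 <;> subst_eqs <;> simp_all [eq_comm]

lemma fib_swap_i (ht : A t = i) (ht' : A t' = j) (hij : i ≠ j) :
    fibA (fun s => if s = t then j else if s = t' then i else A s) i
      = insert t' ((fibA A i).erase t) := by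
  have htt' : t ≠ t' := fun h => hij (by rw [← ht, h, ht'])
  unfold fibA
  ext s
  simp only [mem_filter, mem_univ, true_and, mem_insert, mem_erase]
  split_ifs with h1 h2 <;> subst_eqs <;> simp_all [eq_comm]

lemma fib_swap_j (ht : A t = i) (ht' : A t' = j) (hij : i ≠ j) :
    fibA (fun s => if s = t then j else if s = t' then i else A s) j
      = insert t ((fibA A j).erase t') := by
  unfold fibA
  ext s
  simp only [mem_filter, mem_univ, true_and, mem_insert, mem_erase]
  have htt' : t ≠ t' := fun h => hij (by rw [← ht, h, ht'])
  split_ifs with h1 h2 <;> subst_eqs <;> simp_all [eq_comm]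

lemma wCost_swap (ht : A t = i) (ht' : A t' = j) (hij : i ≠ j) :
    wCost d w (fun s => if s = t then j else if s = t' then i else A s)
      = wCost d w A + ((fibA A i).card : ℝ) * d i * (w t' - w t)
        + ((fibA A j).card : ℝ) * d j * (w t - w t') := by
  have htt' : t ≠ t' := fun h => hij (by rw [← ht, h, ht'])
  have hti : t ∈ fibA A i := by simp [fibA, ht]
  have ht'j : t' ∈ fibA A j := by simp [fibA, ht']
  have ht'i : t' ∉ (fibA A i).erase t := by simp [fibA, ht', hij.symm]
  have htj : t ∉ (fibA A j).erase t' := by simp [fibA, ht, hij]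
  set B : Fin n → Fin m := fun s => if s = t then j else if s = t' then i else A s with hB
  have hcardi : ((fibA B i).card : ℝ) = ((fibA A i).card : ℝ) := by
    rw [fib_swap_i A ht ht' hij, Finset.card_insert_of_notMem ht'i,
      Finset.card_erase_add_one hti]
  have hcardj : ((fibA B j).card : ℝ) = ((fibA A j).card : ℝ) := by
    rw [fib_swap_j A ht ht' hij, Finset.card_insert_of_notMem htj,
      Finset.card_erase_add_one ht'j]
  have hsumi : ∑ s ∈ fibA B i, w s = (∑ s ∈ fibA A i, w s) - w t + w t' := by
    rw [fib_swap_i A ht ht' hij, Finset.sum_insert ht'i, Finset.sum_erase_eq_sub hti]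
    ring
  have hsumj : ∑ s ∈ fibA B j, w s = (∑ s ∈ fibA A j, w s) - w t' + w t := by
    rw [fib_swap_j A ht ht' hij, Finset.sum_insert htj, Finset.sum_erase_eq_sub ht'j]
    ring
  rw [wCost_eq, wCost_eq,
    sum_split_two (fun ℓ => ((fibA B ℓ).card : ℝ) * (d ℓ * ∑ s ∈ fibA B ℓ, w s)) hij,
    sum_split_two (fun ℓ => ((fibA A ℓ).card : ℝ) * (d ℓ * ∑ s ∈ fibA A ℓ, w s)) hij]
  have hrest : ∑ ℓ ∈ (univ.erase i).erase j,
      ((fibA B ℓ).card : ℝ) * (d ℓ * ∑ s ∈ fibA B ℓ, w s)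
      = ∑ ℓ ∈ (univ.erase i).erase j,
      ((fibA A ℓ).card : ℝ) * (d ℓ * ∑ s ∈ fibA A ℓ, w s) := by
    refine Finset.sum_congr rfl fun ℓ hℓ => ?_
    have hℓj : ℓ ≠ j := (mem_erase.mp hℓ).1
    have hℓi : ℓ ≠ i := (mem_erase.mp (mem_erase.mp hℓ).2).1
    rw [fib_swap_ne A ht ht' hij hℓi hℓj]
  rw [hrest, hcardi, hcardj, hsumi, hsumj]
  ring

lemma wPhi_swap (ht : A t = i) (ht' : A t' = j) (hij : i ≠ j) :
    wPhi w (fun s => if s = t then j else if s = t' then i else A s)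
      = wPhi w A + (((j : ℕ) : ℝ) - ((i : ℕ) : ℝ)) * w t
        + (((i : ℕ) : ℝ) - ((j : ℕ) : ℝ)) * w t' := by
  have htt' : t ≠ t' := fun h => hij (by rw [← ht, h, ht'])
  set B : Fin n → Fin m := fun s => if s = t then j else if s = t' then i else A s with hB
  unfold wPhi
  rw [sum_split_two (fun s => ((B s : ℕ) : ℝ) * w s) htt',
    sum_split_two (fun s => ((A s : ℕ) : ℝ) * w s) htt']
  have hrest : ∑ s ∈ (univ.erase t).erase t', ((B s : ℕ) : ℝ) * w s
      = ∑ s ∈ (univ.erase t).erase t', ((A s : ℕ) : ℝ) * w s := by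
    refine Finset.sum_congr rfl fun s hs => ?_
    have hs2 : s ≠ t' := (mem_erase.mp hs).1
    have hs1 : s ≠ t := (mem_erase.mp (mem_erase.mp hs).2).1
    simp [hB, hs1, hs2]
  have hBt : B t = j := by simp [hB]
  have hBt' : B t' = i := by simp [hB, htt'.symm]
  rw [hrest, hBt, hBt', ht, ht']
  ring

end Swap

/-- There exists an optimal assignment in which the resources can be linearly
ordered so that earlier resources only receive tasks of weight at most those of
later resources. -/
theorem exists_ordered_optimal_assignment
    (n m : ℕ) (hm : 0 < m) (d : Fin m → ℝ) (hd : ∀ ℓ, 0 < d ℓ)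
    (w : Fin n → ℝ) (hw : ∀ i, 0 < w i) :
    ∃ A : Fin n → Fin m,
      (∀ B : Fin n → Fin m, wCost d w A ≤ wCost d w B) ∧
      ∃ π : Equiv.Perm (Fin m),
        ∀ (i j : Fin m), π i < π j →
          ∀ (t t' : Fin n), A t = i → A t' = j → w t ≤ w t' := by
  -- pick a lexicographic minimizer of (cost, potential)
  have hne : (univ : Finset (Fin n → Fin m)).Nonempty :=
    ⟨fun _ => ⟨0, hm⟩, mem_univ _⟩
  obtain ⟨A, -, hA⟩ := Finset.exists_min_image univ
    (fun A => toLex (wCost d w A, wPhi w A)) hne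
  have hC : ∀ B : Fin n → Fin m, wCost d w A ≤ wCost d w B := by
    intro B
    rcases Prod.Lex.le_iff.mp (hA B (mem_univ B)) with h | ⟨h, -⟩
    · exact le_of_lt h
    · exact le_of_eq h
  have hPhi : ∀ B : Fin n → Fin m, wCost d w B = wCost d w A → wPhi w A ≤ wPhi w B := by
    intro B hB
    rcases Prod.Lex.le_iff.mp (hA B (mem_univ B)) with h | ⟨-, h⟩
    · exact absurd hB (ne_of_gt (by simpa using h))
    · exact h
  refine ⟨A, hC, ?_⟩
  -- sort resources by load coefficient descending, index descending on ties
  set c : Fin m → ℝ := fun ℓ => ((fibA A ℓ).card : ℝ) * d ℓ with hc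
  set key : Fin m → ℝ ×ₗ ℝ := fun ℓ => toLex (-c ℓ, -((ℓ : ℕ) : ℝ)) with hkey
  have hkeyinj : Function.Injective key := by
    intro a b hab
    have h2 : -((a : ℕ) : ℝ) = -((b : ℕ) : ℝ) := congrArg (fun p => (ofLex p).2) hab
    have : ((a : ℕ) : ℝ) = ((b : ℕ) : ℝ) := by linarith
    exact Fin.ext (Nat.cast_injective this)
  refine ⟨(Tuple.sort key)⁻¹, ?_⟩
  intro i j hij t t' hti ht'j
  have hkmono : key i < key j := by
    have h1 : key i ≤ key j := by
      have := Tuple.monotone_sort key (le_of_lt hij)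
      simpa [Function.comp] using this
    refine lt_of_le_of_ne h1 fun h => ?_
    exact absurd (congrArg (fun x => (Tuple.sort key)⁻¹ x) (hkeyinj h)) (ne_of_lt hij)
  have hijne : i ≠ j := fun h => (ne_of_lt hij) (congrArg (fun x => (Tuple.sort key)⁻¹ x) h)
  by_contra hcon
  push_neg at hcon
  -- hcon : w t' < w t ; consider swapping t and t'
  set B : Fin n → Fin m := fun s => if s = t then j else if s = t' then i else A s with hB
  have hcost : wCost d w B = wCost d w A + c i * (w t' - w t) + c j * (w t - w t') :=
    wCost_swap d w A hti ht'j hijne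
  rcases Prod.Lex.lt_iff.mp hkmono with h | ⟨h1, h2⟩
  · -- c j < c i : swapping strictly decreases cost
    have hcij : c j < c i := by simpa [hkey] using h
    have : wCost d w B < wCost d w A := by nlinarith
    exact absurd (hC B) (not_le.mpr this)
  · -- c i = c j and j < i : swapping keeps cost, strictly decreases potential
    have hcij : c i = c j := by simpa using neg_injective h1
    have hji : ((j : ℕ) : ℝ) < ((i : ℕ) : ℝ) := by simpa [hkey] using h2
    have hcosteq : wCost d w B = wCost d w A := by rw [hcost, hcij]; ring
    have hphi : wPhi w B = wPhi w A
        + (((j : ℕ) : ℝ) - ((i : ℕ) : ℝ)) * w t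
        + (((i : ℕ) : ℝ) - ((j : ℕ) : ℝ)) * w t' :=
      wPhi_swap w A hti ht'j hijne
    have : wPhi w B < wPhi w A := by nlinarith
    exact absurd (hPhi B hcosteq) (not_le.mpr this)
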